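/- Let B be a Banach A-bimodule with A·A** ⊆ A (A is a right ideal in A**) and B**·A = B** (the right module action of A on B** is surjective). If every continuous derivation from A** into B*** is inner, then every continuous derivation from A into B* is inner. -/

import Mathlib

namespace NormedSpace

/-- The topological dual of a seminormed space `E` (old `NormedSpace.Dual`, removed from Mathlib). -/
abbrev Dual (𝕜 : Type*) [NontriviallyNormedField 𝕜] (E : Type*) [SeminormedAddCommGroup E]
    [NormedSpace 𝕜 E] : Type _ :=
  E →L[𝕜] 𝕜

end NormedSpace

open ContinuousLinearMap NormedSpace

noncomputable section

section Defs

variable {X Y Z W : Type} [NormedAddCommGroup X] [NormedSpace ℝ X]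
  [NormedAddCommGroup Y] [NormedSpace ℝ Y] [NormedAddCommGroup Z] [NormedSpace ℝ Z]
  [NormedAddCommGroup W] [NormedSpace ℝ W]

/-- The first adjoint `m^*` of a bounded bilinear map `m : X × Y → Z`,
as a map `Z^* × X → Y^*`, `⟨m^*(z',x), y⟩ = ⟨z', m(x,y)⟩`. -/
def adj1 (m : X →L[ℝ] Y →L[ℝ] Z) :
    Dual ℝ Z →L[ℝ] X →L[ℝ] Dual ℝ Y :=
  (((ContinuousLinearMap.compL ℝ X (Y →L[ℝ] Z) (Dual ℝ Y)).flip m).comp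
    (ContinuousLinearMap.compL ℝ Y Z ℝ))

@[simp] lemma adj1_apply (m : X →L[ℝ] Y →L[ℝ] Z) (z' : Dual ℝ Z) (x : X) (y : Y) :
    adj1 m z' x y = z' (m x y) := rfl

/-- The first (left) Arens extension `m^{***} : X^{**} × Y^{**} → Z^{**}` of a
bounded bilinear map `m : X × Y → Z`. -/
def arens (m : X →L[ℝ] Y →L[ℝ] Z) :
    Dual ℝ (Dual ℝ X) →L[ℝ] Dual ℝ (Dual ℝ Y) →L[ℝ] Dual ℝ (Dual ℝ Z) :=
  adj1 (adj1 (adj1 m))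

/-- The adjoint (dual map) of a bounded linear map. -/
def dualMap' (D : X →L[ℝ] Y) : Dual ℝ Y →L[ℝ] Dual ℝ X :=
  (ContinuousLinearMap.compL ℝ X Y ℝ).flip D

@[simp] lemma dualMap'_apply (D : X →L[ℝ] Y) (g : Dual ℝ Y) (x : X) :
    dualMap' D g x = g (D x) := rfl

/-- The second adjoint `D'' : X^{**} → Y^{**}` of a bounded linear map. -/
def bidualMap (D : X →L[ℝ] Y) : Dual ℝ (Dual ℝ X) →L[ℝ] Dual ℝ (Dual ℝ Y) :=
  dualMap' (dualMap' D)

/-- Given an action `t : A × X → X`, the transposed action on the dual `X^*`: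
`(dualAct t) a f = f ∘ (t a)`. -/
def dualAct (t : W →L[ℝ] X →L[ℝ] X) : W →L[ℝ] Dual ℝ X →L[ℝ] Dual ℝ X :=
  ((ContinuousLinearMap.compL ℝ X X ℝ).flip).comp t

@[simp] lemma dualAct_apply (t : W →L[ℝ] X →L[ℝ] X) (a : W) (f : Dual ℝ X) (x : X) :
    dualAct t a f x = f (t a x) := rfl

/-- `D : A → X` is a derivation with respect to the multiplication `mul'` on `A`
and the left action `l` and right action `r` (`r a x` means `x · a`) of `A` on `X`. -/
def IsDer {A' : Type} [NormedAddCommGroup A'] [NormedSpace ℝ A']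
    (mul' : A' →L[ℝ] A' →L[ℝ] A') (l r : A' →L[ℝ] X →L[ℝ] X) (D : A' →L[ℝ] X) : Prop :=
  ∀ a b : A', D (mul' a b) = l a (D b) + r b (D a)

/-- `D : A → X` is an inner derivation: `D a = a·x - x·a` for some `x`. -/
def IsInner {A' : Type} [NormedAddCommGroup A'] [NormedSpace ℝ A']
    (l r : A' →L[ℝ] X →L[ℝ] X) (D : A' →L[ℝ] X) : Prop :=
  ∃ x : X, ∀ a : A', D a = l a x - r a x

/-- The bimodule axioms for actions `l`, `r` of an algebra with multiplication `mul'`. -/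
def IsBimod {A' : Type} [NormedAddCommGroup A'] [NormedSpace ℝ A']
    (mul' : A' →L[ℝ] A' →L[ℝ] A') (l r : A' →L[ℝ] X →L[ℝ] X) : Prop :=
  (∀ a b x, l (mul' a b) x = l a (l b x)) ∧
  (∀ a b x, r (mul' a b) x = r b (r a x)) ∧
  (∀ a b x, l a (r b x) = r b (l a x))

/-- weak*-to-weak* continuity of a map between dual spaces. -/
def WStarCont (f : Dual ℝ X → Dual ℝ Y) : Prop :=
  ∀ y : Y, Continuous fun φ : WeakDual ℝ X => f φ y

end Defs

/-- A packaged Banach `A`-bimodule (used to form iterated duals). -/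
structure ModPk (A : Type) [NormedAddCommGroup A] [NormedSpace ℝ A] : Type 1 where
  X : Type
  [grp : NormedAddCommGroup X]
  [mod : NormedSpace ℝ X]
  l : A →L[ℝ] X →L[ℝ] X
  r : A →L[ℝ] X →L[ℝ] X

attribute [instance] ModPk.grp ModPk.mod

variable {A : Type} [NormedAddCommGroup A] [NormedSpace ℝ A]

/-- The canonical dual of a packaged bimodule. -/
def ModPk.dual (P : ModPk A) : ModPk A :=
  ⟨Dual ℝ P.X, dualAct P.r, dualAct P.l⟩

/-- The `n`-th iterated dual of a packaged bimodule. -/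
def ModPk.iter (P : ModPk A) : ℕ → ModPk A
  | 0 => P
  | n+1 => (P.iter n).dual

/-- A "level": an algebra (given by its bilinear multiplication) together with a bimodule. -/
structure Lvl : Type 1 where
  Alg : Type
  [g1 : NormedAddCommGroup Alg]
  [m1 : NormedSpace ℝ Alg]
  Mod : Type
  [g2 : NormedAddCommGroup Mod]
  [m2 : NormedSpace ℝ Mod]
  mul : Alg →L[ℝ] Alg →L[ℝ] Alg
  l : Alg →L[ℝ] Mod →L[ℝ] Mod
  r : Alg →L[ℝ] Mod →L[ℝ] Mod

attribute [instance] Lvl.g1 Lvl.m1 Lvl.g2 Lvl.m2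

/-- Passing to second duals: `A^{**}` with the first Arens product, acting on `B^{**}`
via the Arens extensions `π_ℓ^{***}` and `π_r^{***}` of the module actions. -/
def Lvl.double (Q : Lvl) : Lvl where
  Alg := Dual ℝ (Dual ℝ Q.Alg)
  Mod := Dual ℝ (Dual ℝ Q.Mod)
  mul := arens Q.mul
  l := arens Q.l
  r := (arens Q.r.flip).flip

/-- Iterated even duals: `Lvl.iter Q n` is the level `(A^{(2n)}, B^{(2n)})`. -/
def Lvl.iter (Q : Lvl) : ℕ → Lvl
  | 0 => Q
  | n+1 => (Q.iter n).double

/-- The canonical embedding `A → A^{(2n)}`. -/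
def Lvl.embA (Q : Lvl) : (n : ℕ) → Q.Alg →L[ℝ] (Q.iter n).Alg
  | 0 => ContinuousLinearMap.id ℝ _
  | n+1 => (inclusionInDoubleDual ℝ ((Q.iter n).Alg)).comp (Q.embA n)

/-- The canonical embedding `B → B^{(2n)}`. -/
def Lvl.embM (Q : Lvl) : (n : ℕ) → Q.Mod →L[ℝ] (Q.iter n).Mod
  | 0 => ContinuousLinearMap.id ℝ _
  | n+1 => (inclusionInDoubleDual ℝ ((Q.iter n).Mod)).comp (Q.embM n)

/-- The left-topological-center condition `Z^ℓ_{A^{(2n+2)}}(B^{(2n+2)}) = B^{(2n+2)}`,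
stated at the double of a level `Q`: for each `b` in the second-dual module, the map
`a ↦ b·a` is weak*-to-weak* continuous. -/
def Lvl.doubleZl (Q : Lvl) : Prop :=
  ∀ b : (Q.double).Mod, WStarCont (X := Dual ℝ Q.Alg) (Y := Dual ℝ Q.Mod)
    (fun a => (Q.double).r a b)

/-- The base level of a Banach algebra `A` with a Banach `A`-bimodule `B`. -/
def lvlOf (A : Type) [NormedRing A] [NormedAlgebra ℝ A]
    (B : Type) [NormedAddCommGroup B] [NormedSpace ℝ B]
    (l r : A →L[ℝ] B →L[ℝ] B) : Lvl :=
  Lvl.mk A B (ContinuousLinearMap.mul ℝ A) l r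
section Aux

variable {X Y Z : Type} [NormedAddCommGroup X] [NormedSpace ℝ X]
  [NormedAddCommGroup Y] [NormedSpace ℝ Y] [NormedAddCommGroup Z] [NormedSpace ℝ Z]

lemma arens_apply (m : X →L[ℝ] Y →L[ℝ] Z) (F : Dual ℝ (Dual ℝ X))
    (G : Dual ℝ (Dual ℝ Y)) (φ : Dual ℝ Z) :
    arens m F G φ = F (adj1 (adj1 m) G φ) := rfl

@[simp] lemma bidualMap_apply (D : X →L[ℝ] Y) (F : Dual ℝ (Dual ℝ X)) (g : Dual ℝ Y) :
    bidualMap D F g = F (dualMap' D g) := rfl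

lemma arens_incl (m : X →L[ℝ] Y →L[ℝ] Z) (x : X) (y : Y) :
    arens m (inclusionInDoubleDual ℝ X x) (inclusionInDoubleDual ℝ Y y) =
      inclusionInDoubleDual ℝ Z (m x y) := by
  ext φ
  simp [arens_apply, NormedSpace.dual_def]

end Aux

set_option maxHeartbeats 2000000 in
/-- **Theorem 2-16.** Let `B` be a Banach `A`-bimodule with `A·A** ⊆ A` and
`B**·A = B**`. If every continuous derivation `A** → B***` is inner, then every
continuous derivation `A → B*` is inner. -/
theorem stmt11 (A : Type) [NormedRing A] [NormedAlgebra ℝ A] [CompleteSpace A]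
    (B : Type) [NormedAddCommGroup B] [NormedSpace ℝ B] [CompleteSpace B]
    (l r : A →L[ℝ] B →L[ℝ] B)
    (hbim : IsBimod (ContinuousLinearMap.mul ℝ A) l r)
    -- `A·A** ⊆ A`
    (hid : ∀ (a : A) (F : Dual ℝ (Dual ℝ A)), ∃ b : A,
      arens (ContinuousLinearMap.mul ℝ A) (inclusionInDoubleDual ℝ A a) F =
        inclusionInDoubleDual ℝ A b)
    -- `B**·A = B**`
    (hsurj : ∀ b'' : Dual ℝ (Dual ℝ B), ∃ (G : Dual ℝ (Dual ℝ B)) (a : A),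
      b'' = (arens r.flip).flip (inclusionInDoubleDual ℝ A a) G)
    -- `H¹(A**, B***) = 0`
    (hcoh : ∀ D2 : Dual ℝ (Dual ℝ A) →L[ℝ] Dual ℝ (Dual ℝ (Dual ℝ B)),
      IsDer (arens (ContinuousLinearMap.mul ℝ A))
        (dualAct (W := Dual ℝ (Dual ℝ A)) (X := Dual ℝ (Dual ℝ B)) ((arens r.flip).flip))
        (dualAct (W := Dual ℝ (Dual ℝ A)) (X := Dual ℝ (Dual ℝ B)) (arens l)) D2 →
      IsInner
        (dualAct (W := Dual ℝ (Dual ℝ A)) (X := Dual ℝ (Dual ℝ B)) ((arens r.flip).flip))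
        (dualAct (W := Dual ℝ (Dual ℝ A)) (X := Dual ℝ (Dual ℝ B)) (arens l)) D2) :
    -- `H¹(A, B*) = 0`
    ∀ D : A →L[ℝ] Dual ℝ B,
      IsDer (ContinuousLinearMap.mul ℝ A) (dualAct r) (dualAct l) D →
      IsInner (dualAct r) (dualAct l) D := by
  intro D hD
  have hr2 : ∀ (a x : A) (b : B),
      r (a * x) b = r x (r a b) := fun a x b => hbim.2.1 a x b
  -- the key consequence of `A·A** ⊆ A`
  have hkey : ∀ (a : A) (F : Dual ℝ (Dual ℝ A)) (b₀ : A),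
      arens (ContinuousLinearMap.mul ℝ A) (inclusionInDoubleDual ℝ A a) F =
        inclusionInDoubleDual ℝ A b₀ →
      ∀ κ : Dual ℝ A, F (adj1 (ContinuousLinearMap.mul ℝ A) κ a) = κ b₀ := by
    intro a F b₀ hb κ
    have h := congrArg (fun T => T κ) hb
    simpa [arens_apply, NormedSpace.dual_def] using h
  -- `D''` is a derivation
  have hder2 : IsDer (arens (ContinuousLinearMap.mul ℝ A))
      (dualAct (W := Dual ℝ (Dual ℝ A)) (X := Dual ℝ (Dual ℝ B)) ((arens r.flip).flip))
      (dualAct (W := Dual ℝ (Dual ℝ A)) (X := Dual ℝ (Dual ℝ B)) (arens l))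
      (bidualMap D) := by
    intro F G
    ext ψ
    obtain ⟨η, a, hψ⟩ := hsurj ψ
    obtain ⟨b₀, hb⟩ := hid a F
    have hk := hkey a F b₀ hb
    have hψ' : ∀ f : Dual ℝ B, ψ f = η (dualAct r a f) := by
      intro f
      have hincl : adj1 (adj1 r.flip) (inclusionInDoubleDual ℝ A a) f = dualAct r a f := by
        ext b
        simp [NormedSpace.dual_def]
      rw [hψ]
      calc (arens r.flip).flip (inclusionInDoubleDual ℝ A a) η f
          = η (adj1 (adj1 r.flip) (inclusionInDoubleDual ℝ A a) f) := rfl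
        _ = η (dualAct r a f) := by rw [hincl]
    -- step 1: splitting using the derivation identity for `D`
    have step1 : adj1 (adj1 (ContinuousLinearMap.mul ℝ A)) G (dualMap' D ψ) =
        (G.comp ((dualMap' D).comp ((dualAct (dualAct r)).flip ψ)))
          + dualMap' D (arens l G ψ) := by
      ext x
      have hin : adj1 (ContinuousLinearMap.mul ℝ A) (dualMap' D ψ) x =
          dualMap' D (dualAct (dualAct r) x ψ) + adj1 (adj1 l) ψ (D x) := by
        ext y
        have e1 : adj1 l (D x) y = dualAct l y (D x) := by ext b; rfl
        calc adj1 (ContinuousLinearMap.mul ℝ A) (dualMap' D ψ) x y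
            = ψ (D (ContinuousLinearMap.mul ℝ A x y)) := rfl
          _ = ψ (dualAct r x (D y) + dualAct l y (D x)) := by rw [hD x y]
          _ = ψ (dualAct r x (D y)) + ψ (dualAct l y (D x)) := map_add ψ _ _
          _ = _ := by
              rw [← e1]; rfl
      calc adj1 (adj1 (ContinuousLinearMap.mul ℝ A)) G (dualMap' D ψ) x
          = G (adj1 (ContinuousLinearMap.mul ℝ A) (dualMap' D ψ) x) := rfl
        _ = G (dualMap' D (dualAct (dualAct r) x ψ)) + G (adj1 (adj1 l) ψ (D x)) := by
            rw [hin, map_add]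
        _ = _ := rfl
    -- step 2: the crux identity, using `hid` and `hsurj`
    have key2 : F (G.comp ((dualMap' D).comp ((dualAct (dualAct r)).flip ψ))) =
        G (dualMap' D (arens r.flip ψ F)) := by
      have hT1 : G.comp ((dualMap' D).comp ((dualAct (dualAct r)).flip ψ)) =
          adj1 (ContinuousLinearMap.mul ℝ A)
            (G.comp ((dualMap' D).comp ((dualAct (dualAct r)).flip η))) a := by
        ext x
        have hmid : dualAct (dualAct r) x ψ =
            dualAct (dualAct r) (ContinuousLinearMap.mul ℝ A a x) η := by
          ext f
          have e2 : dualAct r a (dualAct r x f) =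
              dualAct r (ContinuousLinearMap.mul ℝ A a x) f := by
            ext b
            simp [hr2]
          calc dualAct (dualAct r) x ψ f = ψ (dualAct r x f) := rfl
            _ = η (dualAct r a (dualAct r x f)) := hψ' _
            _ = η (dualAct r (ContinuousLinearMap.mul ℝ A a x) f) := by rw [e2]
            _ = _ := rfl
        calc (G.comp ((dualMap' D).comp ((dualAct (dualAct r)).flip ψ))) x
            = G (dualMap' D (dualAct (dualAct r) x ψ)) := rfl
          _ = G (dualMap' D (dualAct (dualAct r) (ContinuousLinearMap.mul ℝ A a x) η)) := by
              rw [hmid]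
          _ = _ := rfl
      have harens : arens r.flip ψ F = dualAct (dualAct r) b₀ η := by
        ext f
        have h3 : dualAct r a (adj1 (adj1 r.flip) F f) = dualAct r b₀ f := by
          ext b
          have h4 : adj1 r.flip f (r a b) =
              adj1 (ContinuousLinearMap.mul ℝ A) (adj1 r.flip f b) a := by
            ext x
            simp [hr2]
          calc dualAct r a (adj1 (adj1 r.flip) F f) b
              = F (adj1 r.flip f (r a b)) := rfl
            _ = F (adj1 (ContinuousLinearMap.mul ℝ A) (adj1 r.flip f b) a) := by rw [h4]
            _ = (adj1 r.flip f b) b₀ := hk _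
            _ = dualAct r b₀ f b := rfl
        calc arens r.flip ψ F f = ψ (adj1 (adj1 r.flip) F f) := rfl
          _ = η (dualAct r a (adj1 (adj1 r.flip) F f)) := hψ' _
          _ = η (dualAct r b₀ f) := by rw [h3]
          _ = dualAct (dualAct r) b₀ η f := rfl
      rw [hT1, hk, harens]
      rfl
    calc bidualMap D (arens (ContinuousLinearMap.mul ℝ A) F G) ψ
        = F (adj1 (adj1 (ContinuousLinearMap.mul ℝ A)) G (dualMap' D ψ)) := rfl
      _ = F (G.comp ((dualMap' D).comp ((dualAct (dualAct r)).flip ψ)))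
            + F (dualMap' D (arens l G ψ)) := by rw [step1, map_add]
      _ = G (dualMap' D (arens r.flip ψ F)) + F (dualMap' D (arens l G ψ)) := by rw [key2]
      _ = _ := rfl
  -- conclude via `hcoh`
  obtain ⟨Φ, hΦ⟩ := hcoh (bidualMap D) hder2
  refine ⟨dualMap' (inclusionInDoubleDual ℝ B) Φ, fun a => ?_⟩
  ext b
  have h := congrArg (fun Φ' => Φ' (inclusionInDoubleDual ℝ B b))
    (hΦ (inclusionInDoubleDual ℝ A a))
  have e5 : (arens r.flip).flip (inclusionInDoubleDual ℝ A a) (inclusionInDoubleDual ℝ B b)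
      = inclusionInDoubleDual ℝ B (r a b) := by
    calc (arens r.flip).flip (inclusionInDoubleDual ℝ A a) (inclusionInDoubleDual ℝ B b)
        = arens r.flip (inclusionInDoubleDual ℝ B b) (inclusionInDoubleDual ℝ A a) := rfl
      _ = inclusionInDoubleDual ℝ B (r.flip b a) := arens_incl _ _ _
      _ = inclusionInDoubleDual ℝ B (r a b) := rfl
  have e6 : arens l (inclusionInDoubleDual ℝ A a) (inclusionInDoubleDual ℝ B b)
      = inclusionInDoubleDual ℝ B (l a b) := arens_incl _ _ _
  calc D a b
      = bidualMap D (inclusionInDoubleDual ℝ A a) (inclusionInDoubleDual ℝ B b) := by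
        simp [NormedSpace.dual_def]
    _ = Φ ((arens r.flip).flip (inclusionInDoubleDual ℝ A a) (inclusionInDoubleDual ℝ B b))
          - Φ (arens l (inclusionInDoubleDual ℝ A a) (inclusionInDoubleDual ℝ B b)) := by
        simpa using h
    _ = Φ (inclusionInDoubleDual ℝ B (r a b)) - Φ (inclusionInDoubleDual ℝ B (l a b)) := by
        rw [e5, e6]
    _ = _ := by simp [NormedSpace.dual_def]
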